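/- arXiv:2101.00773 — 3 statements merged into one kernel-verified Lean document; each statement's English description precedes it below -/
import Mathlib

section
/- Observability from serology testing: in the SIR model with baseline serology, if the outputs i_d(t) and r_d(t) and their derivatives are known on an interval, η θ(t) + η_BI θ_B > 0 and θ_B η_BR > 0, then the full state is determined: i_u(t) = (i_d'(t) + γ i_d(t))/(η θ(t) + η_BI θ_B), r_u(t) = (r_d'(t) - γ i_d(t))/(θ_B η_BR), and s(t) = 1 - i_u(t) - r_u(t) - i_d(t) - r_d(t). -/
/-- Observability from serology testing: the full state is
determined from the outputs `i_d`, `r_d` and their derivatives. -/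
theorem sir_observable_serology
    (γ η ηBI ηBR θB : ℝ) (θ s iu iD ru rD : ℝ → ℝ)
    (hpos1 : ∀ t, 0 < η * θ t + ηBI * θB) (hpos2 : 0 < θB * ηBR)
    (hiD : ∀ t, HasDerivAt iD ((η * θ t + θB * ηBI) * iu t - γ * iD t) t)
    (hrD : ∀ t, HasDerivAt rD (γ * iD t + θB * ηBR * ru t) t)
    (hsum : ∀ t, s t + iu t + iD t + ru t + rD t = 1) :
    ∀ t, iu t = (deriv iD t + γ * iD t) / (η * θ t + ηBI * θB) ∧
         ru t = (deriv rD t - γ * iD t) / (θB * ηBR) ∧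
         s t = 1 - iu t - ru t - iD t - rD t := by
  intro t
  have h1 := (hiD t).deriv
  have h2 := (hrD t).deriv
  have hne1 : η * θ t + ηBI * θB ≠ 0 := (hpos1 t).ne'
  have hne2 : θB * ηBR ≠ 0 := hpos2.ne'
  refine ⟨?_, ?_, ?_⟩
  · rw [h1, mul_comm θB ηBI, eq_div_iff hne1]; ring
  · rw [h2, eq_div_iff hne2]; ring
  · linarith [hsum t]
end

section
/- Feedback law keeping total infections constant: along the extended SIR dynamics with symptoms, if at time t one has i_u(t) + i_d(t) = i_max and β s(t) i_u(t) = γ i_max, then choosing θ(t) = β (s(t) - i_u(t)) - γ - κ (assuming η = 1) makes the second derivative of i_u + i_d vanish: d²(i_u+i_d)/dt² = 0. -/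
/-- Feedback law keeping total infections constant: with
`θ(t) = β(s(t) - i_u(t)) - γ - κ` (and `η = 1`), the second derivative of
`i_u + i_d`, i.e. the derivative of `β s i_u - γ (i_u + i_d)`, vanishes. -/
theorem sir_feedback_second_derivative_zero
    (β γ κ imax t : ℝ) (hβ : 0 < β) (hγ : 0 < γ) (hκ : 0 < κ)
    (s iu iD θ : ℝ → ℝ)
    (hs : ∀ u, HasDerivAt s (-β * s u * iu u) u)
    (hiu : ∀ u, HasDerivAt iu (β * s u * iu u - (γ + θ u + κ) * iu u) u)
    (hiD : ∀ u, HasDerivAt iD ((θ u + κ) * iu u - γ * iD u) u)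
    (hmax : iu t + iD t = imax) (hhold : β * s t * iu t = γ * imax)
    (hθ : θ t = β * (s t - iu t) - γ - κ) :
    HasDerivAt (fun u => β * s u * iu u - γ * (iu u + iD u)) 0 t := by
  have h := (((hs t).const_mul β).mul (hiu t)).sub
    (((hiu t).add (hiD t)).const_mul γ)
  refine h.congr_deriv ?_
  rw [hθ] at *
  ring_nf
  nlinarith [hhold, hmax, sq_nonneg (iu t)]
end

section
/- Linear decay of susceptibles on the holding arc: if s' = -β s i_u and i_u' + i_d' = 0 with i_u + i_d ≡ i_max and i_d' = (θ + κ) i_u - γ i_d where θ is the holding feedback law, then s'(t) = -γ i_max, so s(t) = s(t_B) - γ i_max (t - t_B). -/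
/-- Linear decay of susceptibles on the holding arc:
if `i_u + i_d ≡ i_max` on `[t_B, t_C]`, then
`s(t) = s(t_B) - γ i_max (t - t_B)`. -/
theorem sir_holding_arc_susceptible_linear
    (β γ κ imax tB tC : ℝ) (hβ : 0 < β) (hγ : 0 < γ) (hκ : 0 < κ)
    (hBC : tB ≤ tC) (s iu iD θ : ℝ → ℝ)
    (hs : ∀ t ∈ Set.Icc tB tC, HasDerivAt s (-β * s t * iu t) t)
    (hiu : ∀ t ∈ Set.Icc tB tC,
      HasDerivAt iu (β * s t * iu t - (γ + θ t + κ) * iu t) t)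
    (hiD : ∀ t ∈ Set.Icc tB tC, HasDerivAt iD ((θ t + κ) * iu t - γ * iD t) t)
    (hsum : ∀ t ∈ Set.Icc tB tC, iu t + iD t = imax) :
    ∀ t ∈ Set.Icc tB tC, s t = s tB - γ * imax * (t - tB) := by
  rcases eq_or_lt_of_le hBC with heq | hlt
  · intro t ht
    have : t = tB := le_antisymm (heq ▸ ht.2) ht.1
    subst this
    ring
  · -- key: β s t iu t = γ * imax on Icc
    have key : ∀ t ∈ Set.Icc tB tC, -β * s t * iu t = -(γ * imax) := by
      intro t ht
      have hsumD : HasDerivAt (fun u => iu u + iD u)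
          (β * s t * iu t - γ * imax) t := by
        have := (hiu t ht).add (hiD t ht)
        refine this.congr_deriv ?_
        have h := hsum t ht
        nlinarith [hsum t ht]
      have h1 : HasDerivWithinAt (fun u => iu u + iD u)
          (β * s t * iu t - γ * imax) (Set.Icc tB tC) t :=
        hsumD.hasDerivWithinAt
      have h2 : HasDerivWithinAt (fun u => iu u + iD u) 0 (Set.Icc tB tC) t :=
        (hasDerivWithinAt_const t _ imax).congr (fun u hu => hsum u hu) (hsum t ht)
      have hud : UniqueDiffWithinAt ℝ (Set.Icc tB tC) t :=
        uniqueDiffOn_Icc hlt t ht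
      have := hud.eq_deriv _ h1 h2
      linarith [this]
    -- so s has derivative -(γ * imax) on Icc
    have hs' : ∀ t ∈ Set.Icc tB tC,
        HasDerivAt (fun u => s u + γ * imax * u) 0 t := by
      intro t ht
      have := (hs t ht).add ((hasDerivAt_id t).const_mul (γ * imax))
      refine this.congr_deriv ?_
      have := key t ht
      linarith
    have hconst : ∀ t ∈ Set.Icc tB tC,
        (fun u => s u + γ * imax * u) t = (fun u => s u + γ * imax * u) tB := by
      apply constant_of_has_deriv_right_zero
      · intro x hx
        exact ((hs' x hx).continuousAt).continuousWithinAt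
      · intro x hx
        exact (hs' x (Set.mem_Icc_of_Ico hx)).hasDerivWithinAt
    intro t ht
    have := hconst t ht
    simp only at this
    linarith
end
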